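/- Let 1 \le r \le n/2 and let A be the adjacency matrix of the bipartite graph on S(n,r-1) \cup S(n,r) (the union of the two Hamming spheres of radii r-1 and r), where two vertices are adjacent iff their Hamming distance is 1. Then for each 0 \le t \le r-1, the numbers \pm\sqrt{(r-t)(n-r-t+1)} are eigenvalues of A with multiplicity \binom{n}{t} - \binom{n}{t-1} each, and 0 is an eigenvalue with multiplicity \binom{n}{r} - \binom{n}{r-1}; these account for all eigenvalues. -/

import Mathlib

/-- Hamming weight of a Boolean vector. -/
def wt {n : ℕ} (x : Fin n → Bool) : ℕ :=
  (Finset.univ.filter (fun i => x i = true)).card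

/-- Adjacency matrix of the subgraph of the Hamming cube induced by the union
of the Hamming spheres of radii `r-1` and `r`. -/
def twoSphereAdj (n r : ℕ) :
    Matrix {x : Fin n → Bool // wt x = r - 1 ∨ wt x = r}
      {x : Fin n → Bool // wt x = r - 1 ∨ wt x = r} ℝ :=
  fun u v => if hammingDist u.1 v.1 = 1 then 1 else 0

/-- `binom(n,t) - binom(n,t-1)`, with `binom(n,-1) := 0`. -/
def dimV (n t : ℕ) : ℕ :=
  if t = 0 then 1 else Nat.choose n t - Nat.choose n (t - 1)

open Polynomial Matrix Finset Module

abbrev BV (n k : ℕ) := {x : Fin n → Bool // wt x = k}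

abbrev Tk (n k : ℕ) := {x : Fin n → Bool // wt x = k ∨ wt x = k + 1}

noncomputable section TwoSphereDev

variable {n : ℕ}

lemma wt_le (x : Fin n → Bool) : wt x ≤ n := by
  classical
  simpa [wt] using (Finset.card_filter_le Finset.univ (fun i => x i = true))

lemma hd_eq (x y : Fin n → Bool) :
    hammingDist x y = (Finset.univ.filter fun i => ¬ x i = y i).card := rfl

lemma wt_update_true {x : Fin n → Bool} {i : Fin n} (h : x i = false) :
    wt (Function.update x i true) = wt x + 1 := by
  classical
  have hset : (Finset.univ.filter fun j => Function.update x i true j = true)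
      = insert i (Finset.univ.filter fun j => x j = true) := by
    ext j
    by_cases hj : j = i <;> simp [Function.update_apply, hj]
  unfold wt
  rw [hset, Finset.card_insert_of_notMem (by simp [h])]

lemma wt_update_false_le (x : Fin n → Bool) (i : Fin n) :
    wt (Function.update x i false) ≤ wt x := by
  classical
  apply Finset.card_le_card
  intro j hj
  simp only [Finset.mem_filter, Finset.mem_univ, true_and] at *
  by_cases hji : j = i
  · simp [Function.update_apply, hji] at hj
  · simpa [Function.update_apply, hji] using hj

lemma dist_update {x : Fin n → Bool} {i : Fin n} (h : x i = false) :
    hammingDist (Function.update x i true) x = 1 := by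
  classical
  rw [hd_eq]
  have : (Finset.univ.filter fun j => ¬ Function.update x i true j = x j) = {i} := by
    ext j
    by_cases hj : j = i <;> simp [Function.update_apply, hj, h]
  rw [this, Finset.card_singleton]

lemma one_diff {z x : Fin n → Bool} (h : hammingDist z x = 1) :
    ∃ i, (¬ z i = x i) ∧ ∀ j, j ≠ i → z j = x j := by
  classical
  rw [hd_eq] at h
  obtain ⟨i, hi⟩ := Finset.card_eq_one.mp h
  refine ⟨i, ?_, ?_⟩
  · have : i ∈ (Finset.univ.filter fun j => ¬ z j = x j) := by rw [hi]; simp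
    simpa using this
  · intro j hj
    by_contra hzj
    have : j ∈ (Finset.univ.filter fun j => ¬ z j = x j) := by simp [hzj]
    rw [hi] at this
    simp at this
    exact hj this

lemma dist_one_wt {z x : Fin n → Bool} (h : hammingDist z x = 1) :
    wt z = wt x + 1 ∨ wt x = wt z + 1 := by
  classical
  obtain ⟨i, hi, huniq⟩ := one_diff h
  cases hxi : x i
  · left
    have hzi : z i = true := by
      cases hzi : z i
      · exact absurd (by rw [hzi, hxi]) hi
      · rfl
    have : z = Function.update x i true := by
      funext j
      by_cases hj : j = i
      · subst hj; simp [Function.update_apply, hzi]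
      · simp [Function.update_apply, hj, huniq j hj]
    rw [this, wt_update_true hxi]
  · right
    have hzi : z i = false := by
      cases hzi : z i
      · rfl
      · exact absurd (by rw [hzi, hxi]) hi
    have : x = Function.update z i true := by
      funext j
      by_cases hj : j = i
      · subst hj; simp [Function.update_apply, hxi]
      · simp [Function.update_apply, hj, (huniq j hj).symm]
    rw [this, wt_update_true hzi]

/-- characterization of upper covers -/
lemma cov_char {k : ℕ} {x : Fin n → Bool} (hx : wt x = k) (z : Fin n → Bool) :
    (wt z = k + 1 ∧ hammingDist z x = 1) ↔
      ∃ i, x i = false ∧ z = Function.update x i true := by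
  classical
  constructor
  · rintro ⟨hz, hd⟩
    obtain ⟨i, hi, huniq⟩ := one_diff hd
    cases hxi : x i
    · have hzi : z i = true := by
        cases hzi : z i
        · exact absurd (by rw [hzi, hxi]) hi
        · rfl
      refine ⟨i, hxi, ?_⟩
      funext j
      by_cases hj : j = i
      · subst hj; simp [Function.update_apply, hzi]
      · simp [Function.update_apply, hj, huniq j hj]
    · exfalso
      have hzi : z i = false := by
        cases hzi : z i
        · rfl
        · exact absurd (by rw [hzi, hxi]) hi
      have hzeq : z = Function.update x i false := by
        funext j
        by_cases hj : j = i
        · subst hj; simp [Function.update_apply, hzi]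
        · simp [Function.update_apply, hj, huniq j hj]
      have := wt_update_false_le x i
      rw [← hzeq, hz, hx] at this
      omega
  · rintro ⟨i, hxi, rfl⟩
    exact ⟨by rw [wt_update_true hxi, hx], dist_update hxi⟩

/-- if weights are equal and x ≠ y then y has a coordinate true where x is false -/
lemma exists_flip {x y : Fin n → Bool} (hw : wt x = wt y) (hxy : x ≠ y) :
    ∃ b, x b = false ∧ y b = true := by
  classical
  by_contra hcon
  push_neg at hcon
  have hsub : (Finset.univ.filter fun i => y i = true) ⊆
      (Finset.univ.filter fun i => x i = true) := by
    intro i hi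
    simp only [mem_filter, mem_univ, true_and] at *
    cases hxi : x i
    · exact absurd hi (by simpa [hxi] using hcon i hxi)
    · rfl
  have heq := Finset.eq_of_subset_of_card_le hsub (le_of_eq hw)
  apply hxy
  funext i
  have := Finset.ext_iff.mp heq i
  simp only [mem_filter, mem_univ, true_and] at this
  cases hxi : x i <;> cases hyi : y i <;> simp_all

/-- structure of a common upper neighbour of two distinct sets -/
lemma pair_of_common {k : ℕ} {x y z : Fin n → Bool} (hx : wt x = k) (hy : wt y = k)
    (hxy : x ≠ y) (hz : wt z = k + 1) (hzx : hammingDist z x = 1)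
    (hzy : hammingDist z y = 1) :
    ∃ i j, i ≠ j ∧ x i = false ∧ y i = true ∧ x j = true ∧ y j = false ∧
      z = Function.update x i true ∧ (∀ l, l ≠ i → l ≠ j → x l = y l) := by
  classical
  obtain ⟨i, hxi, hzi⟩ := (cov_char hx z).mp ⟨hz, hzx⟩
  obtain ⟨j, hyj, hzj⟩ := (cov_char hy z).mp ⟨hz, hzy⟩
  have hij : i ≠ j := by
    rintro rfl
    apply hxy
    funext l
    by_cases hl : l = i
    · subst hl; rw [hxi, hyj]
    · have h1 : z l = x l := by rw [hzi]; simp [Function.update_apply, hl]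
      have h2 : z l = y l := by rw [hzj]; simp [Function.update_apply, hl]
      rw [← h1, h2]
  have hxj : x j = true := by
    have h1 : z j = x j := by rw [hzi]; simp [Function.update_apply, (Ne.symm hij)]
    have h2 : z j = true := by rw [hzj]; simp [Function.update_apply]
    rw [← h1, h2]
  have hyi : y i = true := by
    have h1 : z i = y i := by rw [hzj]; simp [Function.update_apply, hij]
    have h2 : z i = true := by rw [hzi]; simp [Function.update_apply]
    rw [← h1, h2]
  refine ⟨i, j, hij, hxi, hyi, hxj, hyj, hzi, ?_⟩
  intro l hli hlj
  have h1 : z l = x l := by rw [hzi]; simp [Function.update_apply, hli]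
  have h2 : z l = y l := by rw [hzj]; simp [Function.update_apply, hlj]
  rw [← h1, h2]

/-- master counting lemma for common upper neighbours -/
lemma cnt {k : ℕ} {x y : Fin n → Bool} (hx : wt x = k) (hy : wt y = k) :
    Fintype.card {z : Fin n → Bool //
        wt z = k + 1 ∧ hammingDist z x = 1 ∧ hammingDist z y = 1}
      = if x = y then n - k else if hammingDist x y = 2 then 1 else 0 := by
  classical
  by_cases hxy : x = y
  · subst hxy
    rw [if_pos rfl]
    have e1 : {z : Fin n → Bool // wt z = k + 1 ∧ hammingDist z x = 1 ∧ hammingDist z x = 1}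
        ≃ {i : Fin n // x i = false} := by
      refine Equiv.ofBijective (fun z => ⟨Classical.choose ((cov_char hx z.1).mp ⟨z.2.1, z.2.2.1⟩),
        (Classical.choose_spec ((cov_char hx z.1).mp ⟨z.2.1, z.2.2.1⟩)).1⟩) ⟨?_, ?_⟩
      · intro z w hzw
        have hz := (Classical.choose_spec ((cov_char hx z.1).mp ⟨z.2.1, z.2.2.1⟩)).2
        have hw := (Classical.choose_spec ((cov_char hx w.1).mp ⟨w.2.1, w.2.2.1⟩)).2
        apply Subtype.ext
        rw [hz, hw, Subtype.mk_eq_mk.mp hzw]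
      · intro i
        have hup : wt (Function.update x i true) = k + 1 ∧
            hammingDist (Function.update x i true) x = 1 :=
          (cov_char hx _).mpr ⟨i, i.2, rfl⟩
        refine ⟨⟨Function.update x i.1 true, hup.1, hup.2, hup.2⟩, ?_⟩
        -- choose gives some i' with update x i' true = update x i true and x i' = false
        set z : {z : Fin n → Bool // wt z = k + 1 ∧ hammingDist z x = 1 ∧ hammingDist z x = 1} :=
          ⟨Function.update x i.1 true, hup.1, hup.2, hup.2⟩
        have hsp := Classical.choose_spec ((cov_char hx z.1).mp ⟨z.2.1, z.2.2.1⟩)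
        set i' := Classical.choose ((cov_char hx z.1).mp ⟨z.2.1, z.2.2.1⟩)
        apply Subtype.ext
        show i' = i.1
        by_contra hne
        have h1 : z.1 i' = x i' := by
          rw [show z.1 = Function.update x i.1 true from rfl]
          simp [Function.update_apply, hne]
        have h2 : z.1 i' = true := by rw [hsp.2]; simp [Function.update_apply]
        rw [h2, hsp.1] at h1
        exact Bool.true_eq_false.mp h1
    rw [Fintype.card_congr e1]
    have : Fintype.card {i : Fin n // x i = false} =
        (Finset.univ.filter fun i => x i = false).card := Fintype.card_subtype _
    rw [this]
    have hsplit := Finset.card_filter_add_card_filter_not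
      (s := (Finset.univ : Finset (Fin n))) (p := fun i => x i = true)
    simp only [Finset.card_univ, Fintype.card_fin] at hsplit
    have : (Finset.univ.filter fun i => ¬ x i = true) =
        (Finset.univ.filter fun i => x i = false) := by
      ext i; cases h : x i <;> simp [h]
    rw [this] at hsplit
    have hwx : (Finset.univ.filter fun i => x i = true).card = k := hx
    omega
  · rw [if_neg hxy]
    by_cases hd2 : hammingDist x y = 2
    · rw [if_pos hd2]
      rw [Fintype.card_eq_one_iff]
      -- existence
      obtain ⟨b, hxb, hyb⟩ := exists_flip (hx.trans hy.symm) hxy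
      have hzb : wt (Function.update x b true) = k + 1 ∧
          hammingDist (Function.update x b true) x = 1 :=
        (cov_char hx _).mpr ⟨b, hxb, rfl⟩
      have hdzy : hammingDist (Function.update x b true) y = 1 := by
        rw [hd_eq]
        have hset : (Finset.univ.filter fun l => ¬ Function.update x b true l = y l) =
            (Finset.univ.filter fun l => ¬ x l = y l).erase b := by
          ext l
          by_cases hl : l = b
          · subst hl; simp [Function.update_apply, hyb]
          · simp [Function.update_apply, hl, Finset.mem_erase, hl]
        rw [hset, Finset.card_erase_of_mem (by simp [hxb, hyb]), ← hd_eq, hd2]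
      refine ⟨⟨Function.update x b true, hzb.1, hzb.2, hdzy⟩, ?_⟩
      -- uniqueness
      rintro ⟨w, hw1, hw2, hw3⟩
      obtain ⟨i, j, hij, hxi, hyi, hxj, hyj, hweq, hrest⟩ :=
        pair_of_common hx hy hxy hw1 hw2 hw3
      apply Subtype.ext
      show w = Function.update x b true
      have hbi : b = i := by
        by_contra hbi
        by_cases hbj : b = j
        · subst hbj; rw [hxj] at hxb; exact Bool.true_eq_false.mp hxb
        · have := hrest b hbi hbj
          rw [hxb, hyb] at this; exact Bool.true_eq_false.mp this.symm
      rw [hweq, hbi]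
    · rw [if_neg hd2, Fintype.card_eq_zero_iff]
      constructor
      rintro ⟨w, hw1, hw2, hw3⟩
      obtain ⟨i, j, hij, hxi, hyi, hxj, hyj, hweq, hrest⟩ :=
        pair_of_common hx hy hxy hw1 hw2 hw3
      apply hd2
      rw [hd_eq]
      have : (Finset.univ.filter fun l => ¬ x l = y l) = {i, j} := by
        ext l
        simp only [mem_filter, mem_univ, true_and, Finset.mem_insert, Finset.mem_singleton]
        constructor
        · intro hl
          by_contra hc
          push_neg at hc
          exact hl (hrest l hc.1 hc.2)
        · rintro (rfl | rfl)
          · rw [hxi, hyi]; simp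
          · rw [hxj, hyj]; simp
      rw [this, Finset.card_insert_of_notMem (by simpa using hij), Finset.card_singleton]

lemma wt_neg (x : Fin n → Bool) : wt (fun i => !(x i)) = n - wt x := by
  classical
  have hsplit := Finset.card_filter_add_card_filter_not
    (s := (Finset.univ : Finset (Fin n))) (p := fun i => x i = true)
  simp only [Finset.card_univ, Fintype.card_fin] at hsplit
  have h2 : (Finset.univ.filter fun i => ¬ x i = true) =
      (Finset.univ.filter fun i => (!(x i)) = true) := by
    ext i; cases h : x i <;> simp [h]
  rw [h2] at hsplit
  simp only [wt]
  omega

lemma hd_neg (x y : Fin n → Bool) :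
    hammingDist (fun i => !(x i)) (fun i => !(y i)) = hammingDist x y := by
  classical
  show (Finset.univ.filter fun i => ¬ (!(x i)) = (!(y i))).card
      = (Finset.univ.filter fun i => ¬ x i = y i).card
  congr 1
  ext i; cases h : x i <;> cases h' : y i <;> simp [h, h']

lemma bnot_inj {x y : Fin n → Bool} (h : (fun i => !(x i)) = (fun i => !(y i))) : x = y := by
  funext i
  have := congrFun h i
  cases hx : x i <;> cases hy : y i <;> simp_all

/-- counting common lower neighbours via complementation -/
lemma cnt' {k : ℕ} {x y : Fin n → Bool} (hx : wt x = k + 1) (hy : wt y = k + 1) :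
    Fintype.card {z : Fin n → Bool //
        wt z = k ∧ hammingDist z x = 1 ∧ hammingDist z y = 1}
      = if x = y then k + 1 else if hammingDist x y = 2 then 1 else 0 := by
  classical
  have hkn : k + 1 ≤ n := hx ▸ wt_le x
  have e : {z : Fin n → Bool // wt z = k ∧ hammingDist z x = 1 ∧ hammingDist z y = 1}
      ≃ {w : Fin n → Bool // wt w = (n - (k+1)) + 1 ∧
          hammingDist w (fun i => !(x i)) = 1 ∧ hammingDist w (fun i => !(y i)) = 1} := by
    refine ⟨fun z => ⟨fun i => !(z.1 i), ?_, ?_, ?_⟩, fun w => ⟨fun i => !(w.1 i), ?_, ?_, ?_⟩,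
      fun z => Subtype.ext (funext fun i => by simp), fun w => Subtype.ext (funext fun i => by simp)⟩
    · rw [wt_neg, z.2.1]; omega
    · have := hd_neg z.1 x; rw [this, z.2.2.1]
    · have := hd_neg z.1 y; rw [this, z.2.2.2]
    · have h1 := wt_neg w.1; rw [w.2.1] at h1; rw [h1]; omega
    · have h2 := w.2.2.1
      have h3 : hammingDist (fun i => !(w.1 i)) x = 1 := by
        have := hd_neg w.1 x
        calc hammingDist (fun i => !(w.1 i)) x
            = hammingDist (fun i => !(w.1 i)) (fun i => !(!(x i))) := by
              congr 1; funext i; simp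
          _ = hammingDist w.1 (fun i => !(x i)) := hd_neg w.1 (fun i => !(x i))
          _ = 1 := h2
      exact h3
    · have h2 := w.2.2.2
      calc hammingDist (fun i => !(w.1 i)) y
          = hammingDist (fun i => !(w.1 i)) (fun i => !(!(y i))) := by
            congr 1; funext i; simp
        _ = hammingDist w.1 (fun i => !(y i)) := hd_neg w.1 (fun i => !(y i))
        _ = 1 := h2
  rw [Fintype.card_congr e]
  have hx' : wt (fun i => !(x i)) = n - (k+1) := by rw [wt_neg, hx]
  have hy' : wt (fun i => !(y i)) = n - (k+1) := by rw [wt_neg, hy]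
  rw [cnt hx' hy']
  have hdn := hd_neg x y
  by_cases hxy : x = y
  · subst hxy; rw [if_pos rfl, if_pos rfl]; omega
  · rw [if_neg hxy, if_neg (fun h => hxy (bnot_inj h)), hdn]

def upM (n k : ℕ) : Matrix (BV n (k+1)) (BV n k) ℝ :=
  fun z x => if hammingDist z.1 x.1 = 1 then 1 else 0

def DUM (n k : ℕ) : Matrix (BV n k) (BV n k) ℝ := (upM n k)ᵀ * upM n k
def UDM (n k : ℕ) : Matrix (BV n (k+1)) (BV n (k+1)) ℝ := upM n k * (upM n k)ᵀ

lemma sum_boole_card {α : Type*} [Fintype α] (P : α → Prop) [DecidablePred P] :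
    (∑ a : α, (if P a then (1:ℝ) else 0)) = (Fintype.card {a : α // P a} : ℝ) := by
  rw [Finset.sum_boole, Fintype.card_subtype]

lemma DUM_apply (k : ℕ) (x y : BV n k) :
    DUM n k x y = if x = y then ((n:ℝ) - k)
      else if hammingDist x.1 y.1 = 2 then 1 else 0 := by
  classical
  have : DUM n k x y = ∑ z : BV n (k+1),
      (if (hammingDist z.1 x.1 = 1 ∧ hammingDist z.1 y.1 = 1) then (1:ℝ) else 0) := by
    rw [DUM, Matrix.mul_apply]
    refine Finset.sum_congr rfl fun z _ => ?_
    rw [Matrix.transpose_apply, upM, upM]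
    split_ifs with h1 h2 h3 h4 <;> simp_all
  rw [this, sum_boole_card]
  have ecard : Fintype.card {z : BV n (k+1) // hammingDist z.1 x.1 = 1 ∧ hammingDist z.1 y.1 = 1}
      = Fintype.card {z : Fin n → Bool //
          wt z = k + 1 ∧ hammingDist z x.1 = 1 ∧ hammingDist z y.1 = 1} := by
    apply Fintype.card_congr
    exact (Equiv.subtypeSubtypeEquivSubtypeInter (fun z : Fin n → Bool => wt z = k+1)
      (fun z => hammingDist z x.1 = 1 ∧ hammingDist z y.1 = 1))
  rw [ecard, cnt x.2 y.2]
  by_cases hxy : x = y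
  · subst hxy
    rw [if_pos rfl, if_pos rfl]
    have := wt_le x.1
    rw [x.2] at this
    push_cast [Nat.cast_sub this]
    ring
  · rw [if_neg (fun h => hxy (Subtype.ext h)), if_neg hxy]
    split_ifs <;> simp

lemma UDM_apply (k : ℕ) (x y : BV n (k+1)) :
    UDM n k x y = if x = y then ((k:ℝ) + 1)
      else if hammingDist x.1 y.1 = 2 then 1 else 0 := by
  classical
  have : UDM n k x y = ∑ z : BV n k,
      (if (hammingDist z.1 x.1 = 1 ∧ hammingDist z.1 y.1 = 1) then (1:ℝ) else 0) := by
    rw [UDM, Matrix.mul_apply]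
    refine Finset.sum_congr rfl fun z _ => ?_
    rw [Matrix.transpose_apply, upM, upM]
    rw [hammingDist_comm x.1 z.1, hammingDist_comm y.1 z.1]
    split_ifs with h1 h2 h3 h4 <;> simp_all
  rw [this, sum_boole_card]
  have ecard : Fintype.card {z : BV n k // hammingDist z.1 x.1 = 1 ∧ hammingDist z.1 y.1 = 1}
      = Fintype.card {z : Fin n → Bool //
          wt z = k ∧ hammingDist z x.1 = 1 ∧ hammingDist z y.1 = 1} := by
    apply Fintype.card_congr
    exact (Equiv.subtypeSubtypeEquivSubtypeInter (fun z : Fin n → Bool => wt z = k)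
      (fun z => hammingDist z x.1 = 1 ∧ hammingDist z y.1 = 1))
  rw [ecard, cnt' x.2 y.2]
  by_cases hxy : x = y
  · subst hxy
    rw [if_pos rfl, if_pos rfl]
    push_cast
    ring
  · rw [if_neg (fun h => hxy (Subtype.ext h)), if_neg hxy]
    split_ifs <;> simp

lemma I1 (k : ℕ) : DUM n (k+1) = UDM n k + (((n:ℝ) - 2*(k+1)) • (1 : Matrix (BV n (k+1)) (BV n (k+1)) ℝ)) := by
  ext x y
  rw [DUM_apply, Matrix.add_apply, UDM_apply, Matrix.smul_apply, Matrix.one_apply]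
  by_cases hxy : x = y
  · subst hxy
    rw [if_pos rfl, if_pos rfl, if_pos rfl]
    rw [smul_eq_mul]
    push_cast
    ring
  · rw [if_neg hxy, if_neg hxy, if_neg hxy]
    simp

lemma I0 : DUM n 0 = ((n:ℝ)) • (1 : Matrix (BV n 0) (BV n 0) ℝ) := by
  ext x y
  have hxy : x = y := by
    apply Subtype.ext
    funext i
    have hx : x.1 i = false := by
      have := x.2
      by_contra h
      have hi : i ∈ Finset.univ.filter (fun j => x.1 j = true) := by
        simp only [mem_filter, mem_univ, true_and]
        cases hc : x.1 i
        · exact absurd hc h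
        · rfl
      have : (Finset.univ.filter (fun j => x.1 j = true)).card ≠ 0 :=
        Finset.card_ne_zero_of_mem hi
      exact this x.2
    have hy : y.1 i = false := by
      by_contra h
      have hi : i ∈ Finset.univ.filter (fun j => y.1 j = true) := by
        simp only [mem_filter, mem_univ, true_and]
        cases hc : y.1 i
        · exact absurd hc h
        · rfl
      have : (Finset.univ.filter (fun j => y.1 j = true)).card ≠ 0 :=
        Finset.card_ne_zero_of_mem hi
      exact this y.2
    rw [hx, hy]
  subst hxy
  rw [DUM_apply, Matrix.smul_apply, Matrix.one_apply_eq, if_pos rfl]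
  simp

/-- an edge of the cube changes the weight -/
lemma wt_ne_of_dist_one {x y : Fin n → Bool} (h : hammingDist x y = 1) : wt x ≠ wt y := by
  rcases dist_one_wt h with h1 | h1 <;> omega
lemma upM_apply (n k : ℕ) (b : BV n (k+1)) (a : BV n k) :
    upM n k b a = if hammingDist b.1 a.1 = 1 then 1 else 0 := rfl

def muP (n k t : ℕ) : ℝ := ((k:ℝ) + 1 - t) * ((n:ℝ) - k - t)
def pk (n k : ℕ) : Polynomial ℝ := ∏ t ∈ Finset.range (k+1), (X - C (muP n k t))

lemma muP_succ (k t : ℕ) : muP n (k+1) t = muP n k t + ((n:ℝ) - 2*(k+1)) := by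
  unfold muP; push_cast; ring

lemma muP_diag (k : ℕ) : muP n (k+1) (k+1) = (n:ℝ) - 2*(k+1) := by
  unfold muP; push_cast; ring

lemma pow_swap (k m : ℕ) : (UDM n k)^m * upM n k = upM n k * (DUM n k)^m := by
  induction m with
  | zero => simp
  | succ m ih =>
    have h : UDM n k * upM n k = upM n k * DUM n k := by
      rw [UDM, DUM, Matrix.mul_assoc]
    rw [pow_succ, pow_succ, Matrix.mul_assoc, h, ← Matrix.mul_assoc, ih, Matrix.mul_assoc]

lemma swap_poly (k : ℕ) (q : Polynomial ℝ) :
    (aeval (UDM n k)) q * upM n k = upM n k * (aeval (DUM n k)) q := by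
  induction q using Polynomial.induction_on' with
  | add p q hp hq => rw [map_add, map_add, Matrix.add_mul, Matrix.mul_add, hp, hq]
  | monomial m a =>
    rw [aeval_monomial, aeval_monomial, Algebra.algebraMap_eq_smul_one,
      Algebra.algebraMap_eq_smul_one, smul_one_mul, smul_one_mul,
      Matrix.smul_mul, Matrix.mul_smul, pow_swap]

lemma aeval_sub_C (c : ℝ) {m : Type*} [Fintype m] [DecidableEq m] (M : Matrix m m ℝ) :
    (aeval M) (X - C c) = M - c • 1 := by
  rw [map_sub, aeval_X, aeval_C, Algebra.algebraMap_eq_smul_one]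

lemma ann : ∀ k, (aeval (DUM n k)) (pk n k) = 0 := by
  intro k
  induction k with
  | zero =>
    rw [pk, Finset.prod_range_one, aeval_sub_C, I0]
    have : muP n 0 0 = (n:ℝ) := by unfold muP; push_cast; ring
    rw [this, sub_self]
  | succ k ih =>
    have h1 : (aeval (UDM n k)) (pk n k) * upM n k = 0 := by
      rw [swap_poly, ih, Matrix.mul_zero]
    have hassoc : ∀ (A : Matrix (BV n (k+1)) (BV n (k+1)) ℝ),
        A * UDM n k = (A * upM n k) * (upM n k)ᵀ := fun A => by
      rw [UDM, Matrix.mul_assoc]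
    have h2 : (aeval (UDM n k)) (pk n k) * UDM n k = 0 := by
      rw [hassoc, h1, Matrix.zero_mul]
    have hco : pk n (k+1) = ((pk n k).comp (X - C ((n:ℝ) - 2*(k+1)))) * (X - C ((n:ℝ) - 2*(k+1))) := by
      rw [pk, Finset.prod_range_succ, pk, Polynomial.prod_comp]
      congr 1
      · refine Finset.prod_congr rfl fun t ht => ?_
        rw [sub_comp, X_comp, C_comp, muP_succ]
        rw [map_add C]
        ring
      · rw [muP_diag]
    have hUD : DUM n (k+1) - ((n:ℝ) - 2*(k+1)) • 1 = UDM n k := by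
      rw [I1]; abel
    rw [hco, _root_.map_mul, aeval_comp, aeval_sub_C, hUD, h2]

lemma aeval_mulVec_of_eig {m : Type*} [Fintype m] [DecidableEq m] (M : Matrix m m ℝ)
    (q : Polynomial ℝ) (f : m → ℝ) (c : ℝ) (h : M *ᵥ f = c • f) :
    (aeval M) q *ᵥ f = q.eval c • f := by
  induction q using Polynomial.induction_on' with
  | add p q hp hq =>
    rw [map_add, Matrix.add_mulVec, hp, hq, eval_add, add_smul]
  | monomial e a =>
    have hpow : ∀ d : ℕ, M^d *ᵥ f = c^d • f := by
      intro d
      induction d with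
      | zero => simp
      | succ d ihd =>
        rw [pow_succ, ← Matrix.mulVec_mulVec, h, Matrix.mulVec_smul, ihd, smul_smul,
          ← pow_succ']
    rw [aeval_monomial, Algebra.algebraMap_eq_smul_one, smul_one_mul,
      Matrix.smul_mulVec, hpow, eval_monomial, smul_smul]

lemma muP_pos {k t : ℕ} (ht : t ≤ k) (h : 2*(k+1) ≤ n) : 0 < muP n k t := by
  unfold muP
  have h1 : (t:ℝ) ≤ k := by exact_mod_cast ht
  have h2 : (2*k+2:ℝ) ≤ n := by exact_mod_cast h
  apply mul_pos <;> linarith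

lemma up_inj {k : ℕ} (h : 2*(k+1) ≤ n) (f : BV n k → ℝ) (hf : upM n k *ᵥ f = 0) : f = 0 := by
  have hDU : DUM n k *ᵥ f = (0:ℝ) • f := by
    rw [DUM, ← Matrix.mulVec_mulVec, hf, Matrix.mulVec_zero, zero_smul]
  have h0 := aeval_mulVec_of_eig (DUM n k) (pk n k) f 0 hDU
  rw [ann] at h0
  have heval : (pk n k).eval 0 ≠ 0 := by
    rw [pk, eval_prod]
    rw [Finset.prod_ne_zero_iff]
    intro t ht
    rw [eval_sub, eval_X, eval_C]
    have := muP_pos (Nat.lt_succ_iff.mp (Finset.mem_range.mp ht)) h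
    intro hc
    rw [zero_sub, neg_eq_zero] at hc
    rw [hc] at this
    exact lt_irrefl 0 this
  rw [Matrix.zero_mulVec] at h0
  exact (smul_eq_zero.mp h0.symm).resolve_left heval

lemma card_BV (k : ℕ) : Fintype.card (BV n k) = n.choose k := by
  classical
  have e : BV n k ≃ {s : Finset (Fin n) // s.card = k} := by
    refine ⟨fun x => ⟨Finset.univ.filter (fun i => x.1 i = true), x.2⟩,
      fun s => ⟨fun i => decide (i ∈ s.1), ?_⟩, ?_, ?_⟩
    · show wt (fun i => decide (i ∈ s.1)) = k
      have h1 : wt (fun i => decide (i ∈ s.1)) = s.1.card := by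
        unfold wt
        congr 1
        ext i; simp
      rw [h1, s.2]
    · intro x
      apply Subtype.ext
      funext i
      simp only []
      by_cases h : x.1 i = true <;> simp [h]
    · intro s
      apply Subtype.ext
      show Finset.univ.filter _ = s.1
      ext i; simp
  rw [Fintype.card_congr e, Fintype.card_finset_len, Fintype.card_fin]

lemma rank_up {k : ℕ} (h : 2*(k+1) ≤ n) : (upM n k).rank = n.choose k := by
  have hker : LinearMap.ker (upM n k).mulVecLin = ⊥ := by
    rw [LinearMap.ker_eq_bot']
    intro f hf
    exact up_inj h f (by rw [← Matrix.mulVecLin_apply, hf])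
  have hrn := LinearMap.finrank_range_add_finrank_ker (upM n k).mulVecLin
  rw [hker, finrank_bot, add_zero, Module.finrank_pi] at hrn
  rw [card_BV] at hrn
  exact hrn

lemma finrank_eq_of_maps {V W : Type*} [AddCommGroup V] [Module ℝ V] [AddCommGroup W]
    [Module ℝ W] (p : Submodule ℝ V) (q : Submodule ℝ W) (F : V →ₗ[ℝ] W) (G : W →ₗ[ℝ] V)
    (hF : ∀ x ∈ p, F x ∈ q) (hG : ∀ y ∈ q, G y ∈ p)
    (hGF : ∀ x ∈ p, G (F x) = x) (hFG : ∀ y ∈ q, F (G y) = y) :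
    Module.finrank ℝ p = Module.finrank ℝ q := by
  have F' : p →ₗ[ℝ] q := (F.domRestrict p).codRestrict q (fun x => hF x.1 x.2)
  refine LinearEquiv.finrank_eq (LinearEquiv.ofLinear
    ((F.domRestrict p).codRestrict q (fun x => hF x.1 x.2))
    ((G.domRestrict q).codRestrict p (fun y => hG y.1 y.2)) ?_ ?_)
  · apply LinearMap.ext; intro y; apply Subtype.ext
    exact hFG y.1 y.2
  · apply LinearMap.ext; intro x; apply Subtype.ext
    exact hGF x.1 x.2

lemma mem_ker_sub_smul {m : Type*} [Fintype m] [DecidableEq m] (M : Matrix m m ℝ) (c : ℝ)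
    (x : m → ℝ) : x ∈ LinearMap.ker (M - c • 1).mulVecLin ↔ M *ᵥ x = c • x := by
  rw [LinearMap.mem_ker, Matrix.mulVecLin_apply, Matrix.sub_mulVec,
    Matrix.smul_mulVec, Matrix.one_mulVec, sub_eq_zero]

lemma ker_UD {k : ℕ} (g : BV n (k+1) → ℝ) :
    UDM n k *ᵥ g = 0 ↔ (upM n k)ᵀ *ᵥ g = 0 := by
  constructor
  · intro h
    have hdot : ((upM n k)ᵀ *ᵥ g) ⬝ᵥ ((upM n k)ᵀ *ᵥ g) = 0 := by
      nth_rewrite 1 [Matrix.mulVec_transpose]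
      rw [← Matrix.dotProduct_mulVec, Matrix.mulVec_mulVec]
      rw [show upM n k * (upM n k)ᵀ = UDM n k from rfl, h, dotProduct_zero]
    exact dotProduct_self_eq_zero.mp hdot
  · intro h
    rw [UDM, ← Matrix.mulVec_mulVec, h, Matrix.mulVec_zero]

lemma key1 {k : ℕ} (x : BV n (k+1) → ℝ) :
    DUM n k *ᵥ ((upM n k)ᵀ *ᵥ x) = (upM n k)ᵀ *ᵥ (UDM n k *ᵥ x) := by
  rw [DUM, UDM, Matrix.mulVec_mulVec, Matrix.mulVec_mulVec, Matrix.mul_assoc]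

lemma key2 {k : ℕ} (y : BV n k → ℝ) :
    UDM n k *ᵥ (upM n k *ᵥ y) = upM n k *ᵥ (DUM n k *ᵥ y) := by
  rw [DUM, UDM, Matrix.mulVec_mulVec, Matrix.mulVec_mulVec, Matrix.mul_assoc]

lemma mul_dim : ∀ k, 2*k ≤ n → ∀ t, t ≤ k →
    Module.finrank ℝ (LinearMap.ker (DUM n k - (muP n k t) • 1).mulVecLin) = dimV n t := by
  intro k
  induction k with
  | zero =>
    intro _ t ht
    interval_cases t
    have hz : DUM n 0 - (muP n 0 0) • (1 : Matrix (BV n 0) (BV n 0) ℝ) = 0 := by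
      rw [I0, show muP n 0 0 = (n:ℝ) from by unfold muP; push_cast; ring, sub_self]
    rw [hz]
    rw [show (0 : Matrix (BV n 0) (BV n 0) ℝ).mulVecLin = 0 from Matrix.mulVecLin_zero]
    rw [LinearMap.ker_zero, finrank_top, Module.finrank_pi, card_BV]
    simp [dimV]
  | succ k ih =>
    intro hkn t ht
    by_cases htk : t = k + 1
    · subst htk
      have hz : DUM n (k+1) - (muP n (k+1) (k+1)) • 1 = UDM n k := by
        rw [muP_diag, I1]; abel
      rw [hz]
      have hkerset : LinearMap.ker (UDM n k).mulVecLin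
          = LinearMap.ker ((upM n k)ᵀ).mulVecLin := by
        ext g
        rw [LinearMap.mem_ker, LinearMap.mem_ker, Matrix.mulVecLin_apply,
          Matrix.mulVecLin_apply]
        exact ker_UD g
      rw [hkerset]
      have hrn := LinearMap.finrank_range_add_finrank_ker ((upM n k)ᵀ).mulVecLin
      have hrange : Module.finrank ℝ (LinearMap.range ((upM n k)ᵀ).mulVecLin)
          = n.choose k := by
        rw [show Module.finrank ℝ (LinearMap.range ((upM n k)ᵀ).mulVecLin)
            = ((upM n k)ᵀ).rank from rfl]
        rw [Matrix.rank_transpose, rank_up hkn]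
      rw [hrange, Module.finrank_pi, card_BV] at hrn
      have hdim : dimV n (k+1) = n.choose (k+1) - n.choose k := by
        rw [dimV, if_neg (Nat.succ_ne_zero k)]
        simp
      omega
    · have htk' : t ≤ k := by omega
      have heq : DUM n (k+1) - (muP n (k+1) t) • 1
          = UDM n k - (muP n k t) • (1 : Matrix (BV n (k+1)) (BV n (k+1)) ℝ) := by
        rw [I1, muP_succ, add_smul]
        abel
      rw [heq]
      have hlam : muP n k t ≠ 0 := ne_of_gt (muP_pos htk' hkn)
      have hswap : Module.finrank ℝ
            (LinearMap.ker (UDM n k - (muP n k t) • 1).mulVecLin)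
          = Module.finrank ℝ
            (LinearMap.ker (DUM n k - (muP n k t) • 1).mulVecLin) := by
        apply finrank_eq_of_maps _ _ ((upM n k)ᵀ).mulVecLin
          ((muP n k t)⁻¹ • (upM n k).mulVecLin)
        · intro x hx
          rw [mem_ker_sub_smul] at hx ⊢
          rw [Matrix.mulVecLin_apply, key1, hx, Matrix.mulVec_smul]
        · intro y hy
          rw [mem_ker_sub_smul] at hy ⊢
          rw [LinearMap.smul_apply, Matrix.mulVecLin_apply, Matrix.mulVec_smul, key2, hy,
            Matrix.mulVec_smul, smul_smul, smul_smul, mul_comm]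
        · intro x hx
          rw [mem_ker_sub_smul] at hx
          rw [LinearMap.smul_apply, Matrix.mulVecLin_apply, Matrix.mulVecLin_apply]
          rw [show upM n k *ᵥ ((upM n k)ᵀ *ᵥ x) = UDM n k *ᵥ x from by
            rw [UDM, Matrix.mulVec_mulVec]]
          rw [hx, inv_smul_smul₀ hlam]
        · intro y hy
          rw [mem_ker_sub_smul] at hy
          rw [LinearMap.smul_apply, Matrix.mulVecLin_apply, Matrix.mulVecLin_apply,
            Matrix.mulVec_smul]
          rw [show (upM n k)ᵀ *ᵥ (upM n k *ᵥ y) = DUM n k *ᵥ y from by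
            rw [DUM, Matrix.mulVec_mulVec]]
          rw [hy, inv_smul_smul₀ hlam]
      rw [hswap]
      exact ih (by omega) t htk'


def AdjM (n k : ℕ) : Matrix (Tk n k) (Tk n k) ℝ :=
  fun u v => if hammingDist u.1 v.1 = 1 then 1 else 0

lemma adj_eq (n k : ℕ) : twoSphereAdj n (k+1) = AdjM n k := rfl

def j1 (n k : ℕ) : BV n k → Tk n k := fun a => ⟨a.1, Or.inl a.2⟩
def j2 (n k : ℕ) : BV n (k+1) → Tk n k := fun b => ⟨b.1, Or.inr b.2⟩

def esum (n k : ℕ) : (BV n k ⊕ BV n (k+1)) ≃ Tk n k where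
  toFun := Sum.elim (j1 n k) (j2 n k)
  invFun := fun u => if h : wt u.1 = k then Sum.inl ⟨u.1, h⟩
    else Sum.inr ⟨u.1, u.2.resolve_left h⟩
  left_inv := by
    rintro (a | b)
    · dsimp only [Sum.elim_inl]
      split
      next h => exact congrArg Sum.inl (Subtype.ext rfl)
      next h => exact absurd a.2 h
    · dsimp only [Sum.elim_inr]
      split
      next h => exfalso; have hq : wt b.1 = k := h; rw [b.2] at hq; omega
      next h => exact congrArg Sum.inr (Subtype.ext rfl)
  right_inv := by
    intro u
    dsimp only
    split
    next h => exact Subtype.ext rfl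
    next h => exact Subtype.ext rfl

lemma split_sum {n k : ℕ} (g : Tk n k → ℝ) :
    ∑ v, g v = (∑ a, g (j1 n k a)) + ∑ b, g (j2 n k b) := by
  rw [← Equiv.sum_comp (esum n k) g, Fintype.sum_sum_type]
  rfl

lemma adj_j1j1 {n k : ℕ} (a a' : BV n k) : AdjM n k (j1 n k a) (j1 n k a') = 0 := by
  unfold AdjM j1
  dsimp only
  split_ifs with h
  · exact absurd (a.2.trans a'.2.symm) (wt_ne_of_dist_one h)
  · rfl

lemma adj_j2j2 {n k : ℕ} (b b' : BV n (k+1)) : AdjM n k (j2 n k b) (j2 n k b') = 0 := by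
  unfold AdjM j2
  dsimp only
  split_ifs with h
  · exact absurd (b.2.trans b'.2.symm) (wt_ne_of_dist_one h)
  · rfl

lemma adj_j1j2 {n k : ℕ} (a : BV n k) (b : BV n (k+1)) :
    AdjM n k (j1 n k a) (j2 n k b) = upM n k b a := by
  show (if hammingDist a.1 b.1 = 1 then (1:ℝ) else 0) = upM n k b a
  rw [hammingDist_comm, upM_apply]

lemma adj_j2j1 {n k : ℕ} (b : BV n (k+1)) (a : BV n k) :
    AdjM n k (j2 n k b) (j1 n k a) = upM n k b a := by
  show (if hammingDist b.1 a.1 = 1 then (1:ℝ) else 0) = upM n k b a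
  rw [upM_apply]

lemma mulvec_j1 {n k : ℕ} (h : Tk n k → ℝ) (a : BV n k) :
    (AdjM n k *ᵥ h) (j1 n k a) = ((upM n k)ᵀ *ᵥ (h ∘ j2 n k)) a := by
  show ∑ v, AdjM n k (j1 n k a) v * h v = ∑ b, (upM n k)ᵀ a b * (h ∘ j2 n k) b
  rw [split_sum (fun v => AdjM n k (j1 n k a) v * h v)]
  have hz : ∑ a' : BV n k, AdjM n k (j1 n k a) (j1 n k a') * h (j1 n k a') = 0 :=
    Finset.sum_eq_zero (fun a' _ => by rw [adj_j1j1, zero_mul])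
  rw [hz, zero_add]
  refine Finset.sum_congr rfl fun b _ => ?_
  rw [adj_j1j2, Matrix.transpose_apply]
  rfl

lemma mulvec_j2 {n k : ℕ} (h : Tk n k → ℝ) (b : BV n (k+1)) :
    (AdjM n k *ᵥ h) (j2 n k b) = (upM n k *ᵥ (h ∘ j1 n k)) b := by
  show ∑ v, AdjM n k (j2 n k b) v * h v = ∑ a, upM n k b a * (h ∘ j1 n k) a
  rw [split_sum (fun v => AdjM n k (j2 n k b) v * h v)]
  have hz : ∑ b' : BV n (k+1), AdjM n k (j2 n k b) (j2 n k b') * h (j2 n k b') = 0 :=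
    Finset.sum_eq_zero (fun b' _ => by rw [adj_j2j2, zero_mul])
  rw [hz, add_zero]
  refine Finset.sum_congr rfl fun a _ => ?_
  rw [adj_j2j1]
  rfl

lemma eig_comps {n k : ℕ} {h : Tk n k → ℝ} {μ : ℝ} (hh : AdjM n k *ᵥ h = μ • h) :
    (upM n k)ᵀ *ᵥ (h ∘ j2 n k) = μ • (h ∘ j1 n k) ∧
    upM n k *ᵥ (h ∘ j1 n k) = μ • (h ∘ j2 n k) := by
  constructor
  · funext a
    rw [← mulvec_j1, hh]
    rfl
  · funext b
    rw [← mulvec_j2, hh]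
    rfl

/-- linear lifting map for nonzero eigenvalues -/
def liftF (n k : ℕ) (μ : ℝ) : (BV n k → ℝ) →ₗ[ℝ] (Tk n k → ℝ) where
  toFun := fun f u => if h : wt u.1 = k then f ⟨u.1, h⟩
    else μ⁻¹ * ((upM n k *ᵥ f) ⟨u.1, u.2.resolve_left h⟩)
  map_add' := fun f g => by
    funext u
    by_cases h : wt u.1 = k
    · simp [h]
    · simp [h, Matrix.mulVec_add]
      ring
  map_smul' := fun c f => by
    funext u
    by_cases h : wt u.1 = k
    · simp [h]
    · simp [h, Matrix.mulVec_smul]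
      ring

lemma liftF_j1 {n k : ℕ} (μ : ℝ) (f : BV n k → ℝ) (a : BV n k) :
    liftF n k μ f (j1 n k a) = f a := by
  show (if h : wt a.1 = k then f ⟨a.1, h⟩ else _) = f a
  rw [dif_pos a.2]

lemma liftF_j2 {n k : ℕ} (μ : ℝ) (f : BV n k → ℝ) (b : BV n (k+1)) :
    liftF n k μ f (j2 n k b) = μ⁻¹ * ((upM n k *ᵥ f) b) := by
  have hb : ¬ (wt b.1 = k) := by rw [b.2]; omega
  show (if h : wt b.1 = k then f ⟨b.1, h⟩ else μ⁻¹ * ((upM n k *ᵥ f) ⟨b.1, _⟩)) = _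
  rw [dif_neg hb]

def projG (n k : ℕ) : (Tk n k → ℝ) →ₗ[ℝ] (BV n k → ℝ) := LinearMap.funLeft ℝ ℝ (j1 n k)

/-- eigenspace dimension for nonzero eigenvalues -/
lemma eig_ne_zero_dim (n k : ℕ) (μ : ℝ) (hμ : μ ≠ 0) :
    Module.finrank ℝ (Module.End.eigenspace (Matrix.toLin' (AdjM n k)) μ)
      = Module.finrank ℝ (LinearMap.ker (DUM n k - (μ^2) • 1).mulVecLin) := by
  symm
  apply finrank_eq_of_maps _ _ (liftF n k μ) (projG n k)
  · -- f in kernel → lift in eigenspace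
    intro f hf
    rw [mem_ker_sub_smul] at hf
    rw [Module.End.mem_eigenspace_iff, Matrix.toLin'_apply]
    funext u
    by_cases hu : wt u.1 = k
    · have hueq : u = j1 n k ⟨u.1, hu⟩ := rfl
      rw [hueq, mulvec_j1]
      have hcomp : liftF n k μ f ∘ j2 n k = μ⁻¹ • (upM n k *ᵥ f) := by
        funext b
        rw [Function.comp_apply, liftF_j2]
        rfl
      rw [hcomp, Matrix.mulVec_smul]
      rw [show (upM n k)ᵀ *ᵥ (upM n k *ᵥ f) = DUM n k *ᵥ f from by
        rw [DUM, Matrix.mulVec_mulVec]]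
      rw [hf]
      show μ⁻¹ * (μ^2 * f ⟨u.1, hu⟩) = μ * liftF n k μ f (j1 n k ⟨u.1, hu⟩)
      rw [liftF_j1]
      field_simp
    · have hu2 : wt u.1 = k + 1 := u.2.resolve_left hu
      have hueq : u = j2 n k ⟨u.1, hu2⟩ := rfl
      rw [hueq, mulvec_j2]
      have hcomp : liftF n k μ f ∘ j1 n k = f := by
        funext a
        rw [Function.comp_apply, liftF_j1]
      rw [hcomp]
      show (upM n k *ᵥ f) ⟨u.1, hu2⟩ = μ * liftF n k μ f (j2 n k ⟨u.1, hu2⟩)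
      rw [liftF_j2]
      field_simp
  · -- eigenvector → component in kernel
    intro h hh
    rw [Module.End.mem_eigenspace_iff, Matrix.toLin'_apply] at hh
    obtain ⟨h1, h2⟩ := eig_comps hh
    rw [mem_ker_sub_smul]
    show DUM n k *ᵥ (h ∘ j1 n k) = μ^2 • (h ∘ j1 n k)
    rw [DUM, ← Matrix.mulVec_mulVec, h2, Matrix.mulVec_smul, h1, smul_smul, sq]
  · -- G ∘ F = id
    intro f _
    funext a
    show liftF n k μ f (j1 n k a) = f a
    rw [liftF_j1]
  · -- F ∘ G = id on eigenspace
    intro h hh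
    rw [Module.End.mem_eigenspace_iff, Matrix.toLin'_apply] at hh
    obtain ⟨h1, h2⟩ := eig_comps hh
    funext u
    by_cases hu : wt u.1 = k
    · have hueq : u = j1 n k ⟨u.1, hu⟩ := rfl
      rw [hueq]
      show liftF n k μ (h ∘ j1 n k) (j1 n k ⟨u.1, hu⟩) = h (j1 n k ⟨u.1, hu⟩)
      rw [liftF_j1]
      rfl
    · have hu2 : wt u.1 = k + 1 := u.2.resolve_left hu
      have hueq : u = j2 n k ⟨u.1, hu2⟩ := rfl
      rw [hueq]
      show liftF n k μ (h ∘ j1 n k) (j2 n k ⟨u.1, hu2⟩) = h (j2 n k ⟨u.1, hu2⟩)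
      rw [liftF_j2, h2]
      show μ⁻¹ * (μ * h (j2 n k ⟨u.1, hu2⟩)) = _
      field_simp

/-- linear lifting for the zero eigenvalue -/
def liftZ (n k : ℕ) : (BV n (k+1) → ℝ) →ₗ[ℝ] (Tk n k → ℝ) where
  toFun := fun g u => if h : wt u.1 = k then 0 else g ⟨u.1, u.2.resolve_left h⟩
  map_add' := fun f g => by
    funext u
    by_cases h : wt u.1 = k <;> simp [h]
  map_smul' := fun c f => by
    funext u
    by_cases h : wt u.1 = k <;> simp [h]

lemma liftZ_j1 {n k : ℕ} (g : BV n (k+1) → ℝ) (a : BV n k) :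
    liftZ n k g (j1 n k a) = 0 := by
  show (if h : wt a.1 = k then (0:ℝ) else _) = 0
  rw [dif_pos a.2]

lemma liftZ_j2 {n k : ℕ} (g : BV n (k+1) → ℝ) (b : BV n (k+1)) :
    liftZ n k g (j2 n k b) = g b := by
  have hb : ¬ (wt b.1 = k) := by rw [b.2]; omega
  show (if h : wt b.1 = k then (0:ℝ) else g ⟨b.1, _⟩) = g b
  rw [dif_neg hb]

def projG2 (n k : ℕ) : (Tk n k → ℝ) →ₗ[ℝ] (BV n (k+1) → ℝ) := LinearMap.funLeft ℝ ℝ (j2 n k)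

lemma eig_zero_dim (n k : ℕ) (hn : 2*(k+1) ≤ n) :
    Module.finrank ℝ (Module.End.eigenspace (Matrix.toLin' (AdjM n k)) 0)
      = n.choose (k+1) - n.choose k := by
  have hstep : Module.finrank ℝ (Module.End.eigenspace (Matrix.toLin' (AdjM n k)) 0)
      = Module.finrank ℝ (LinearMap.ker ((upM n k)ᵀ).mulVecLin) := by
    symm
    apply finrank_eq_of_maps _ _ (liftZ n k) (projG2 n k)
    · intro g hg
      rw [LinearMap.mem_ker, Matrix.mulVecLin_apply] at hg
      rw [Module.End.mem_eigenspace_iff, Matrix.toLin'_apply, zero_smul]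
      funext u
      by_cases hu : wt u.1 = k
      · have hueq : u = j1 n k ⟨u.1, hu⟩ := rfl
        rw [hueq, mulvec_j1]
        have hcomp : liftZ n k g ∘ j2 n k = g := by
          funext b; rw [Function.comp_apply, liftZ_j2]
        rw [hcomp, hg]
        rfl
      · have hu2 : wt u.1 = k + 1 := u.2.resolve_left hu
        have hueq : u = j2 n k ⟨u.1, hu2⟩ := rfl
        rw [hueq, mulvec_j2]
        have hcomp : liftZ n k g ∘ j1 n k = 0 := by
          funext a; rw [Function.comp_apply, liftZ_j1]; rfl
        rw [hcomp, Matrix.mulVec_zero]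
        rfl
    · intro h hh
      rw [Module.End.mem_eigenspace_iff, Matrix.toLin'_apply, zero_smul] at hh
      have h1 := (eig_comps (by rw [hh, zero_smul])).1
      rw [zero_smul] at h1
      rw [LinearMap.mem_ker, Matrix.mulVecLin_apply]
      exact h1
    · intro g _
      funext b
      show liftZ n k g (j2 n k b) = g b
      rw [liftZ_j2]
    · intro h hh
      rw [Module.End.mem_eigenspace_iff, Matrix.toLin'_apply, zero_smul] at hh
      have h2 := (eig_comps (by rw [hh, zero_smul])).2
      rw [zero_smul] at h2
      have hj1 : h ∘ j1 n k = 0 := up_inj hn _ h2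
      funext u
      by_cases hu : wt u.1 = k
      · have hueq : u = j1 n k ⟨u.1, hu⟩ := rfl
        rw [hueq]
        show liftZ n k (h ∘ j2 n k) (j1 n k ⟨u.1, hu⟩) = h (j1 n k ⟨u.1, hu⟩)
        rw [liftZ_j1]
        have := congrFun hj1 ⟨u.1, hu⟩
        simp only [Function.comp_apply, Pi.zero_apply] at this
        exact this.symm
      · have hu2 : wt u.1 = k + 1 := u.2.resolve_left hu
        have hueq : u = j2 n k ⟨u.1, hu2⟩ := rfl
        rw [hueq]
        show liftZ n k (h ∘ j2 n k) (j2 n k ⟨u.1, hu2⟩) = h (j2 n k ⟨u.1, hu2⟩)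
        rw [liftZ_j2]
        rfl
  rw [hstep]
  have hrn := LinearMap.finrank_range_add_finrank_ker ((upM n k)ᵀ).mulVecLin
  have hrange : Module.finrank ℝ (LinearMap.range ((upM n k)ᵀ).mulVecLin) = n.choose k := by
    rw [show Module.finrank ℝ (LinearMap.range ((upM n k)ᵀ).mulVecLin)
        = ((upM n k)ᵀ).rank from rfl]
    rw [Matrix.rank_transpose, rank_up hn]
  rw [hrange, Module.finrank_pi, card_BV] at hrn
  omega

/-- all eigenvalues -/
lemma eig_all (n k : ℕ) (μ : ℝ)
    (hμ : Module.End.HasEigenvalue (Matrix.toLin' (AdjM n k)) μ) :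
    μ = 0 ∨ ∃ t, t ≤ k ∧ μ^2 = muP n k t := by
  obtain ⟨v, hv⟩ := hμ.exists_hasEigenvector
  have hveq : AdjM n k *ᵥ v = μ • v := by
    rw [← Matrix.toLin'_apply]
    exact hv.apply_eq_smul
  obtain ⟨h1, h2⟩ := eig_comps hveq
  by_cases hf : v ∘ j1 n k = 0
  · left
    have hg : v ∘ j2 n k ≠ 0 := by
      intro hg0
      apply hv.2
      funext u
      by_cases hu : wt u.1 = k
      · have hueq : u = j1 n k ⟨u.1, hu⟩ := rfl
        rw [hueq]
        have := congrFun hf ⟨u.1, hu⟩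
        rw [Function.comp_apply] at this
        exact this
      · have hu2 : wt u.1 = k + 1 := u.2.resolve_left hu
        have hueq : u = j2 n k ⟨u.1, hu2⟩ := rfl
        rw [hueq]
        have := congrFun hg0 ⟨u.1, hu2⟩
        rw [Function.comp_apply] at this
        exact this
    rw [hf, Matrix.mulVec_zero] at h2
    rcases smul_eq_zero.mp h2.symm with h | h
    · exact h
    · exact absurd h hg
  · right
    have hDU : DUM n k *ᵥ (v ∘ j1 n k) = (μ^2) • (v ∘ j1 n k) := by
      rw [DUM, ← Matrix.mulVec_mulVec, h2, Matrix.mulVec_smul, h1, smul_smul, sq]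
    have h0 := aeval_mulVec_of_eig (DUM n k) (pk n k) (v ∘ j1 n k) (μ^2) hDU
    rw [ann] at h0
    rw [Matrix.zero_mulVec] at h0
    have heval : (pk n k).eval (μ^2) = 0 := by
      by_contra hc
      exact hf ((smul_eq_zero.mp h0.symm).resolve_left hc)
    rw [pk, eval_prod] at heval
    obtain ⟨t, ht, hteval⟩ := Finset.prod_eq_zero_iff.mp heval
    refine ⟨t, Nat.lt_succ_iff.mp (Finset.mem_range.mp ht), ?_⟩
    rw [eval_sub, eval_X, eval_C, sub_eq_zero] at hteval
    exact hteval

end TwoSphereDev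

theorem two_sphere_spectrum (n r : ℕ) (hr1 : 1 ≤ r) (hr : 2 * r ≤ n) :
    (∀ t ≤ r - 1,
      Module.finrank ℝ
          (Module.End.eigenspace (Matrix.toLin' (twoSphereAdj n r))
            (Real.sqrt (((r : ℝ) - t) * ((n : ℝ) - r - t + 1)))) = dimV n t ∧
      Module.finrank ℝ
          (Module.End.eigenspace (Matrix.toLin' (twoSphereAdj n r))
            (-Real.sqrt (((r : ℝ) - t) * ((n : ℝ) - r - t + 1)))) = dimV n t) ∧
    Module.finrank ℝ
        (Module.End.eigenspace (Matrix.toLin' (twoSphereAdj n r)) 0) =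
      Nat.choose n r - Nat.choose n (r - 1) ∧
    ∀ μ : ℝ, Module.End.HasEigenvalue (Matrix.toLin' (twoSphereAdj n r)) μ →
      μ = 0 ∨ ∃ t ≤ r - 1,
        μ = Real.sqrt (((r : ℝ) - t) * ((n : ℝ) - r - t + 1)) ∨
        μ = -Real.sqrt (((r : ℝ) - t) * ((n : ℝ) - r - t + 1)) := by
  obtain ⟨k, rfl⟩ : ∃ k, r = k + 1 := ⟨r - 1, by omega⟩
  have hn : 2*(k+1) ≤ n := hr
  refine ⟨?_, ?_, ?_⟩
  · intro t ht
    have ht' : t ≤ k := by omega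
    have hc : (((k+1:ℕ):ℝ) - (t:ℝ)) * ((n:ℝ) - ((k+1:ℕ):ℝ) - (t:ℝ) + 1) = muP n k t := by
      unfold muP; push_cast; ring
    rw [hc]
    have hpos : 0 < muP n k t := muP_pos ht' hn
    have hsq : Real.sqrt (muP n k t) ^ 2 = muP n k t := Real.sq_sqrt hpos.le
    have hne : Real.sqrt (muP n k t) ≠ 0 := ne_of_gt (Real.sqrt_pos.mpr hpos)
    constructor
    · have e1 : Module.finrank ℝ
          (Module.End.eigenspace (Matrix.toLin' (twoSphereAdj n (k+1)))
            (Real.sqrt (muP n k t)))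
          = Module.finrank ℝ (LinearMap.ker
              (DUM n k - ((Real.sqrt (muP n k t))^2) • 1).mulVecLin) :=
        eig_ne_zero_dim n k _ hne
      rw [hsq] at e1
      exact e1.trans (mul_dim k (by omega) t ht')
    · have e1 : Module.finrank ℝ
          (Module.End.eigenspace (Matrix.toLin' (twoSphereAdj n (k+1)))
            (-Real.sqrt (muP n k t)))
          = Module.finrank ℝ (LinearMap.ker
              (DUM n k - ((-Real.sqrt (muP n k t))^2) • 1).mulVecLin) :=
        eig_ne_zero_dim n k _ (neg_ne_zero.mpr hne)
      rw [neg_sq, hsq] at e1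
      exact e1.trans (mul_dim k (by omega) t ht')
  · exact eig_zero_dim n k hn
  · intro μ hμ
    rcases eig_all n k μ hμ with h0 | ⟨t, ht, ht2⟩
    · exact Or.inl h0
    · refine Or.inr ⟨t, ht, ?_⟩
      have hc : (((k+1:ℕ):ℝ) - (t:ℝ)) * ((n:ℝ) - ((k+1:ℕ):ℝ) - (t:ℝ) + 1) = muP n k t := by
        unfold muP; push_cast; ring
      rw [hc]
      have habs : Real.sqrt (muP n k t) = |μ| := by
        rw [← ht2, Real.sqrt_sq_eq_abs]
      rcases abs_cases μ with ⟨h1, _⟩ | ⟨h1, _⟩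
      · left; rw [habs, h1]
      · right; rw [habs, h1, neg_neg]
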